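/- Let K denote the operator (K u)(τ, r, θ) = r^{3/2} ∂_r u(τ, r, θ) acting on smooth functions u : ℝ × (0, ∞) × ℝ³ → ℝ, and let Δ_θ u = Σ_{a=1}^{3} ∂²_{θ^a} u. Define Q₀ u = −(3/(4r²)) u − 2 ∂_r ∂_τ u + ∂_r² u + r^{−2} Δ_θ u and Q₁ u = −2 ∂_r ∂_τ u + ∂_r² u − r^{−1} ∂_τ u − r^{−1} ∂_r u + r^{−2} Δ_θ u. Then for every smooth u, (K + 2 r^{1/2})(Q₀ u) = Q₁ (K u) at every point of ℝ × (0, ∞) × ℝ³. -/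

import Mathlib

noncomputable section

/-- Partial derivative in the radial (second) variable. -/
def pdr3 (u : ℝ → ℝ → (Fin 3 → ℝ) → ℝ) : ℝ → ℝ → (Fin 3 → ℝ) → ℝ :=
  fun τ r θ => deriv (fun x => u τ x θ) r

/-- Partial derivative in the time (first) variable. -/
def pdt3 (u : ℝ → ℝ → (Fin 3 → ℝ) → ℝ) : ℝ → ℝ → (Fin 3 → ℝ) → ℝ :=
  fun τ r θ => deriv (fun t => u t r θ) τ

/-- Partial derivative in the angular variable `θ^a`. -/
def pdth3 (a : Fin 3) (u : ℝ → ℝ → (Fin 3 → ℝ) → ℝ) : ℝ → ℝ → (Fin 3 → ℝ) → ℝ :=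
  fun τ r θ => deriv (fun x => u τ r (Function.update θ a x)) (θ a)

/-- The (flat) angular Laplacian `Δ_θ u = Σ_{a} ∂²_{θ^a} u`. -/
def lap3 (u : ℝ → ℝ → (Fin 3 → ℝ) → ℝ) : ℝ → ℝ → (Fin 3 → ℝ) → ℝ :=
  fun τ r θ => ∑ a, pdth3 a (pdth3 a u) τ r θ

/-- The commutator vector field `K = r^{3/2} ∂_r`. -/
def K3 (u : ℝ → ℝ → (Fin 3 → ℝ) → ℝ) : ℝ → ℝ → (Fin 3 → ℝ) → ℝ :=
  fun τ r θ => r ^ ((3:ℝ)/2) * pdr3 u τ r θ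

/-- `Q₀ u = −(3/(4r²)) u − 2 ∂_r ∂_τ u + ∂_r² u + r^{−2} Δ_θ u`. -/
def Q0 (u : ℝ → ℝ → (Fin 3 → ℝ) → ℝ) : ℝ → ℝ → (Fin 3 → ℝ) → ℝ :=
  fun τ r θ => -(3 / (4 * r ^ 2)) * u τ r θ - 2 * pdr3 (pdt3 u) τ r θ
    + pdr3 (pdr3 u) τ r θ + r ^ (-2:ℝ) * lap3 u τ r θ

/-- `Q₁ u = −2 ∂_r ∂_τ u + ∂_r² u − r^{−1} ∂_τ u − r^{−1} ∂_r u + r^{−2} Δ_θ u`. -/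
def Q1 (u : ℝ → ℝ → (Fin 3 → ℝ) → ℝ) : ℝ → ℝ → (Fin 3 → ℝ) → ℝ :=
  fun τ r θ => -2 * pdr3 (pdt3 u) τ r θ + pdr3 (pdr3 u) τ r θ
    - r⁻¹ * pdt3 u τ r θ - r⁻¹ * pdr3 u τ r θ + r ^ (-2:ℝ) * lap3 u τ r θ

open Set Filter

abbrev E3' := ℝ × ℝ × (Fin 3 → ℝ)

def U3 : Set E3' := (Set.univ : Set ℝ) ×ˢ ((Set.Ioi (0:ℝ)) ×ˢ (Set.univ : Set (Fin 3 → ℝ)))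

lemma isOpen_U3 : IsOpen U3 := isOpen_univ.prod (isOpen_Ioi.prod isOpen_univ)

lemma mem_U3 {τ r : ℝ} {θ : Fin 3 → ℝ} (hr : 0 < r) : ((τ,r,θ) : E3') ∈ U3 := by
  simp [U3, hr]

noncomputable def Dv (v : E3') (G : E3' → ℝ) : E3' → ℝ := fun q => fderiv ℝ G q v

def vT : E3' := (1, 0, 0)
def vR : E3' := (0, 1, 0)
def vA (a : Fin 3) : E3' := (0, 0, Pi.single a 1)

lemma Dv_smooth {G : E3' → ℝ} (hG : ContDiffOn ℝ (⊤:ℕ∞) G U3) (v : E3') :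
    ContDiffOn ℝ (⊤:ℕ∞) (Dv v G) U3 := by
  have h := (contDiffOn_infty_iff_fderiv_of_isOpen isOpen_U3).1 hG
  exact h.2.clm_apply contDiffOn_const

lemma diffAt {G : E3' → ℝ} (hG : ContDiffOn ℝ (⊤:ℕ∞) G U3) {q : E3'} (hq : q ∈ U3) :
    DifferentiableAt ℝ G q :=
  (hG.differentiableOn (by simp)).differentiableAt
    (isOpen_U3.mem_nhds hq)

lemma Dv_symm {G : E3' → ℝ} (hG : ContDiffOn ℝ (⊤:ℕ∞) G U3) (v w : E3') {q : E3'}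
    (hq : q ∈ U3) : Dv v (Dv w G) q = Dv w (Dv v G) q := by
  set f' : E3' → E3' →L[ℝ] ℝ := fun p => fderiv ℝ G p with hf'
  have hf'diff : DifferentiableAt ℝ f' q := by
    have h := (contDiffOn_infty_iff_fderiv_of_isOpen isOpen_U3).1 hG
    exact (h.2.differentiableOn (by simp)).differentiableAt
      (isOpen_U3.mem_nhds hq)
  have hev : ∀ᶠ y in nhds q, HasFDerivAt G (f' y) y := by
    filter_upwards [isOpen_U3.mem_nhds hq] with y hy using (diffAt hG hy).hasFDerivAt
  have hsymm := second_derivative_symmetric_of_eventually hev hf'diff.hasFDerivAt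
  have key : ∀ a b : E3', Dv a (Dv b G) q = (fderiv ℝ f' q) a b := by
    intro a b
    have h1 : HasFDerivAt (fun p => f' p b)
        ((ContinuousLinearMap.apply ℝ ℝ b).comp (fderiv ℝ f' q)) q :=
      (ContinuousLinearMap.apply ℝ ℝ b).hasFDerivAt.comp q hf'diff.hasFDerivAt
    show fderiv ℝ (fun p => f' p b) q a = (fderiv ℝ f' q) a b
    rw [h1.fderiv]
    rfl
  rw [key v w, key w v]
  exact hsymm v w

lemma Dv_congr {H1 H2 : E3' → ℝ} (h : ∀ p ∈ U3, H1 p = H2 p) {q : E3'} (hq : q ∈ U3)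
    (v : E3') : Dv v H1 q = Dv v H2 q := by
  have he : H1 =ᶠ[nhds q] H2 := by
    filter_upwards [isOpen_U3.mem_nhds hq] with p hp using h p hp
  show fderiv ℝ H1 q v = fderiv ℝ H2 q v
  rw [he.fderiv_eq]

lemma sliceR {G : E3' → ℝ} (hG : ContDiffOn ℝ (⊤:ℕ∞) G U3) (τ : ℝ) {r : ℝ}
    (θ : Fin 3 → ℝ) (hr : 0 < r) :
    HasDerivAt (fun x => G (τ, x, θ)) (Dv vR G (τ,r,θ)) r := by
  have hL : HasDerivAt (fun x : ℝ => ((τ, x, θ) : E3')) vR r :=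
    (hasDerivAt_const r τ).prodMk ((hasDerivAt_id r).prodMk (hasDerivAt_const r θ))
  exact (diffAt hG (mem_U3 hr)).hasFDerivAt.comp_hasDerivAt r hL

lemma sliceT {G : E3' → ℝ} (hG : ContDiffOn ℝ (⊤:ℕ∞) G U3) (τ : ℝ) {r : ℝ}
    (θ : Fin 3 → ℝ) (hr : 0 < r) :
    HasDerivAt (fun t => G (t, r, θ)) (Dv vT G (τ,r,θ)) τ := by
  have hL : HasDerivAt (fun t : ℝ => ((t, r, θ) : E3')) vT τ :=
    (hasDerivAt_id τ).prodMk ((hasDerivAt_const τ r).prodMk (hasDerivAt_const τ θ))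
  exact (diffAt hG (mem_U3 hr)).hasFDerivAt.comp_hasDerivAt τ hL

lemma sliceA {G : E3' → ℝ} (hG : ContDiffOn ℝ (⊤:ℕ∞) G U3) (τ : ℝ) {r : ℝ}
    (θ : Fin 3 → ℝ) (hr : 0 < r) (a : Fin 3) :
    HasDerivAt (fun x => G (τ, r, Function.update θ a x)) (Dv (vA a) G (τ,r,θ)) (θ a) := by
  have hup : HasDerivAt (fun x : ℝ => Function.update θ a x) (Pi.single a 1) (θ a) := by
    rw [hasDerivAt_pi]
    intro b
    simp only [Function.update_apply]
    rcases eq_or_ne b a with h | h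
    · subst h
      simp only [if_pos rfl, Pi.single_eq_same]
      exact hasDerivAt_id (θ b)
    · rw [Pi.single_eq_of_ne h]
      simp only [if_neg h]
      exact hasDerivAt_const (θ a) (θ b)
  have hL : HasDerivAt (fun x : ℝ => ((τ, r, Function.update θ a x) : E3')) (vA a) (θ a) :=
    (hasDerivAt_const (θ a) τ).prodMk ((hasDerivAt_const (θ a) r).prodMk hup)
  have hD : HasFDerivAt G (fderiv ℝ G (τ,r,θ)) ((τ, r, Function.update θ a (θ a))) := by
    rw [Function.update_eq_self]
    exact (diffAt hG (mem_U3 hr)).hasFDerivAt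
  exact hD.comp_hasDerivAt (θ a) hL

lemma hderivR' {G : E3' → ℝ} (hG : ContDiffOn ℝ (⊤:ℕ∞) G U3)
    {g : ℝ → ℝ → (Fin 3 → ℝ) → ℝ} (hg : ∀ τ r θ, 0 < r → g τ r θ = G (τ,r,θ))
    (τ : ℝ) {r : ℝ} (θ : Fin 3 → ℝ) (hr : 0 < r) :
    HasDerivAt (fun x => g τ x θ) (Dv vR G (τ,r,θ)) r := by
  refine (sliceR hG τ θ hr).congr_of_eventuallyEq ?_
  filter_upwards [eventually_gt_nhds hr] with x hx using hg τ x θ hx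

lemma hderivT' {G : E3' → ℝ} (hG : ContDiffOn ℝ (⊤:ℕ∞) G U3)
    {g : ℝ → ℝ → (Fin 3 → ℝ) → ℝ} (hg : ∀ τ r θ, 0 < r → g τ r θ = G (τ,r,θ))
    (τ : ℝ) {r : ℝ} (θ : Fin 3 → ℝ) (hr : 0 < r) :
    HasDerivAt (fun t => g t r θ) (Dv vT G (τ,r,θ)) τ := by
  have he : (fun t => g t r θ) = fun t => G (t,r,θ) := funext fun t => hg t r θ hr
  rw [he]; exact sliceT hG τ θ hr

lemma hderivA' {G : E3' → ℝ} (hG : ContDiffOn ℝ (⊤:ℕ∞) G U3)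
    {g : ℝ → ℝ → (Fin 3 → ℝ) → ℝ} (hg : ∀ τ r θ, 0 < r → g τ r θ = G (τ,r,θ))
    (τ : ℝ) {r : ℝ} (θ : Fin 3 → ℝ) (hr : 0 < r) (a : Fin 3) :
    HasDerivAt (fun x => g τ r (Function.update θ a x)) (Dv (vA a) G (τ,r,θ)) (θ a) := by
  have he : (fun x => g τ r (Function.update θ a x))
      = fun x => G (τ, r, Function.update θ a x) := funext fun x => hg τ r _ hr
  rw [he]; exact sliceA hG τ θ hr a
/-- **The key commutation identity `(K + 2 r^{1/2})(Q₀ u) = Q₁ (K u)`** (eqn. (Q₁ K)):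
conjugating `Q₀` (whose inverse-square potential has coefficient `3/4` in spatial
dimension `n = 4`) by `K = r^{3/2} ∂_r` removes the inverse-square potential. -/
theorem K_Q0_Q1_commutation
    (u : ℝ → ℝ → (Fin 3 → ℝ) → ℝ)
    (hu : ContDiffOn ℝ (⊤ : ℕ∞)
      (fun p : ℝ × ℝ × (Fin 3 → ℝ) => u p.1 p.2.1 p.2.2)
      ((Set.univ : Set ℝ) ×ˢ ((Set.Ioi (0:ℝ)) ×ˢ (Set.univ : Set (Fin 3 → ℝ))))) :
    ∀ (τ r : ℝ), 0 < r → ∀ θ : Fin 3 → ℝ,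
      K3 (Q0 u) τ r θ + 2 * r ^ ((1:ℝ)/2) * Q0 u τ r θ = Q1 (K3 u) τ r θ := by
  intro τ r hr θ
  have hq : ((τ,r,θ) : E3') ∈ U3 := mem_U3 hr
  set F : E3' → ℝ := fun p : E3' => u p.1 p.2.1 p.2.2 with hFdef
  have hFs : ContDiffOn ℝ (⊤:ℕ∞) F U3 := hu
  have hg0 : ∀ τ' r' θ', 0 < r' → u τ' r' θ' = F (τ', r', θ') := fun _ _ _ _ => rfl
  -- smoothness of iterated directional derivatives
  have hGt := Dv_smooth hFs vT
  have hGr := Dv_smooth hFs vR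
  have hGa : ∀ a : Fin 3, ContDiffOn ℝ (⊤:ℕ∞) (Dv (vA a) F) U3 :=
    fun a => Dv_smooth hFs (vA a)
  have hGtr := Dv_smooth hGt vR
  have hGrr := Dv_smooth hGr vR
  have hGrt := Dv_smooth hGr vT
  have hGaa : ∀ a : Fin 3, ContDiffOn ℝ (⊤:ℕ∞) (Dv (vA a) (Dv (vA a) F)) U3 :=
    fun a => Dv_smooth (Dv_smooth hFs (vA a)) (vA a)
  have hGL : ContDiffOn ℝ (⊤:ℕ∞)
      (fun q : E3' => ∑ a : Fin 3, Dv (vA a) (Dv (vA a) F) q) U3 :=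
    ContDiffOn.sum fun a _ => hGaa a
  -- first-order representations
  have hgt : ∀ τ' r' θ', 0 < r' → pdt3 u τ' r' θ' = Dv vT F (τ', r', θ') :=
    fun τ' r' θ' hr' => (hderivT' hFs hg0 τ' θ' hr').deriv
  have hgr : ∀ τ' r' θ', 0 < r' → pdr3 u τ' r' θ' = Dv vR F (τ', r', θ') :=
    fun τ' r' θ' hr' => (hderivR' hFs hg0 τ' θ' hr').deriv
  have hga : ∀ (a : Fin 3) τ' r' θ', 0 < r' →
      pdth3 a u τ' r' θ' = Dv (vA a) F (τ', r', θ') :=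
    fun a τ' r' θ' hr' => (hderivA' hFs hg0 τ' θ' hr' a).deriv
  -- second-order representations
  have hgtr : ∀ τ' r' θ', 0 < r' →
      pdr3 (pdt3 u) τ' r' θ' = Dv vR (Dv vT F) (τ', r', θ') :=
    fun τ' r' θ' hr' => (hderivR' hGt hgt τ' θ' hr').deriv
  have hgrr : ∀ τ' r' θ', 0 < r' →
      pdr3 (pdr3 u) τ' r' θ' = Dv vR (Dv vR F) (τ', r', θ') :=
    fun τ' r' θ' hr' => (hderivR' hGr hgr τ' θ' hr').deriv
  have hgaa : ∀ (a : Fin 3) τ' r' θ', 0 < r' →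
      pdth3 a (pdth3 a u) τ' r' θ' = Dv (vA a) (Dv (vA a) F) (τ', r', θ') :=
    fun a τ' r' θ' hr' => (hderivA' (hGa a) (hga a) τ' θ' hr' a).deriv
  have hgL : ∀ τ' r' θ', 0 < r' →
      lap3 u τ' r' θ' = ∑ a : Fin 3, Dv (vA a) (Dv (vA a) F) (τ', r', θ') :=
    fun τ' r' θ' hr' => Finset.sum_congr rfl fun a _ => hgaa a τ' r' θ' hr'
  -- rpow derivative helpers
  have hpow32 : ∀ {r' : ℝ}, 0 < r' →
      HasDerivAt (fun x : ℝ => x ^ ((3:ℝ)/2)) ((3:ℝ)/2 * r' ^ ((1:ℝ)/2)) r' := by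
    intro r' hr'
    have h := Real.hasDerivAt_rpow_const (x := r') (p := (3:ℝ)/2) (Or.inl hr'.ne')
    rw [show (3:ℝ)/2 - 1 = (1:ℝ)/2 by norm_num] at h
    exact h
  have hpow12 : HasDerivAt (fun x : ℝ => x ^ ((1:ℝ)/2)) ((1:ℝ)/2 * r ^ (-(1:ℝ)/2)) r := by
    have h := Real.hasDerivAt_rpow_const (x := r) (p := (1:ℝ)/2) (Or.inl hr.ne')
    rw [show (1:ℝ)/2 - 1 = -(1:ℝ)/2 by norm_num] at h
    exact h
  -- representations for K3 u and its derivatives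
  have hgKt : ∀ τ' r' θ', 0 < r' → pdt3 (K3 u) τ' r' θ' =
      r' ^ ((3:ℝ)/2) * Dv vT (Dv vR F) (τ', r', θ') :=
    fun τ' r' θ' hr' =>
      ((hderivT' hGr hgr τ' θ' hr').const_mul (r' ^ ((3:ℝ)/2))).deriv
  have hgKr : ∀ τ' r' θ', 0 < r' → pdr3 (K3 u) τ' r' θ' =
      (3:ℝ)/2 * r' ^ ((1:ℝ)/2) * Dv vR F (τ', r', θ')
        + r' ^ ((3:ℝ)/2) * Dv vR (Dv vR F) (τ', r', θ') := by
    intro τ' r' θ' hr'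
    rw [← hgr τ' r' θ' hr']
    exact ((hpow32 hr').mul (hderivR' hGr hgr τ' θ' hr')).deriv
  have hgKa : ∀ (a : Fin 3) τ' r' θ', 0 < r' → pdth3 a (K3 u) τ' r' θ' =
      r' ^ ((3:ℝ)/2) * Dv (vA a) (Dv vR F) (τ', r', θ') :=
    fun a τ' r' θ' hr' =>
      ((hderivA' hGr hgr τ' θ' hr' a).const_mul (r' ^ ((3:ℝ)/2))).deriv
  have hgKaa : ∀ (a : Fin 3), pdth3 a (pdth3 a (K3 u)) τ r θ =
      r ^ ((3:ℝ)/2) * Dv (vA a) (Dv (vA a) (Dv vR F)) (τ, r, θ) := by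
    intro a
    have h0 := (sliceA (Dv_smooth hGr (vA a)) τ θ hr a).const_mul (r ^ ((3:ℝ)/2))
    refine (h0.congr_of_eventuallyEq ?_).deriv
    exact Filter.Eventually.of_forall fun x => hgKa a τ r (Function.update θ a x) hr
  -- radial derivatives (at the point) of the second-order quantities
  have hKt_r : HasDerivAt (fun x => pdt3 (K3 u) τ x θ)
      ((3:ℝ)/2 * r ^ ((1:ℝ)/2) * Dv vT (Dv vR F) (τ,r,θ)
        + r ^ ((3:ℝ)/2) * Dv vR (Dv vT (Dv vR F)) (τ,r,θ)) r := by
    refine ((hpow32 hr).mul (sliceR hGrt τ θ hr)).congr_of_eventuallyEq ?_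
    filter_upwards [eventually_gt_nhds hr] with x hx using hgKt τ x θ hx
  have hKr_r : HasDerivAt (fun x => pdr3 (K3 u) τ x θ)
      (((3:ℝ)/2 * ((1:ℝ)/2 * r ^ (-(1:ℝ)/2)) * Dv vR F (τ,r,θ)
          + (3:ℝ)/2 * r ^ ((1:ℝ)/2) * Dv vR (Dv vR F) (τ,r,θ))
        + ((3:ℝ)/2 * r ^ ((1:ℝ)/2) * Dv vR (Dv vR F) (τ,r,θ)
          + r ^ ((3:ℝ)/2) * Dv vR (Dv vR (Dv vR F)) (τ,r,θ))) r := by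
    have h1 := (hpow12.const_mul ((3:ℝ)/2)).mul (sliceR hGr τ θ hr)
    have h2 := (hpow32 hr).mul (sliceR hGrr τ θ hr)
    refine (h1.add h2).congr_of_eventuallyEq ?_
    filter_upwards [eventually_gt_nhds hr] with x hx using hgKr τ x θ hx
  -- radial derivative of Q0 u
  have hcoef : HasDerivAt (fun x : ℝ => -(3 / (4 * x ^ 2))) (3 / (2 * r ^ 3)) r := by
    have h1 := (hasDerivAt_pow 2 r).const_mul (4:ℝ)
    have h2 := h1.inv (by positivity)
    have h3 := h2.const_mul (-3 : ℝ)
    have h4 : HasDerivAt (fun x : ℝ => -(3 / (4 * x ^ 2)))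
        (-3 * (-(4 * ((2:ℝ) * r ^ 1)) / (4 * r ^ 2) ^ 2)) r :=
      h3.congr_of_eventuallyEq (Filter.Eventually.of_forall fun x => by simp only [Pi.inv_apply]; ring)
    convert h4 using 1
    field_simp
    ring
  have hinv2 : HasDerivAt (fun x : ℝ => x ^ (-2:ℝ)) ((-2:ℝ) * r ^ (-3:ℝ)) r := by
    have h := Real.hasDerivAt_rpow_const (x := r) (p := (-2:ℝ)) (Or.inl hr.ne')
    rw [show (-2:ℝ) - 1 = (-3:ℝ) by norm_num] at h
    exact h
  have hQ0_r : HasDerivAt (fun x => Q0 u τ x θ)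
      (((3 / (2 * r ^ 3) * F (τ,r,θ) + -(3 / (4 * r ^ 2)) * Dv vR F (τ,r,θ))
          - 2 * Dv vR (Dv vR (Dv vT F)) (τ,r,θ)
          + Dv vR (Dv vR (Dv vR F)) (τ,r,θ))
        + ((-2:ℝ) * r ^ (-3:ℝ) * (∑ a : Fin 3, Dv (vA a) (Dv (vA a) F) (τ,r,θ))
          + r ^ (-2:ℝ)
            * Dv vR (fun q : E3' => ∑ a : Fin 3, Dv (vA a) (Dv (vA a) F) q) (τ,r,θ))) r := by
    have hbuilt := (((hcoef.mul (sliceR hFs τ θ hr)).sub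
        ((sliceR hGtr τ θ hr).const_mul (2:ℝ))).add (sliceR hGrr τ θ hr)).add
        (hinv2.mul (sliceR hGL τ θ hr))
    refine hbuilt.congr_of_eventuallyEq ?_
    filter_upwards [eventually_gt_nhds hr] with x hx
    show Q0 u τ x θ = _
    simp only [Q0]
    rw [hgtr τ x θ hx, hgrr τ x θ hx, hgL τ x θ hx]
    rfl
  -- point equalities
  have e1 : pdr3 (Q0 u) τ r θ =
      ((3 / (2 * r ^ 3) * F (τ,r,θ) + -(3 / (4 * r ^ 2)) * Dv vR F (τ,r,θ))
          - 2 * Dv vR (Dv vR (Dv vT F)) (τ,r,θ)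
          + Dv vR (Dv vR (Dv vR F)) (τ,r,θ))
        + ((-2:ℝ) * r ^ (-3:ℝ) * (∑ a : Fin 3, Dv (vA a) (Dv (vA a) F) (τ,r,θ))
          + r ^ (-2:ℝ)
            * Dv vR (fun q : E3' => ∑ a : Fin 3, Dv (vA a) (Dv (vA a) F) q) (τ,r,θ)) :=
    hQ0_r.deriv
  have e2 : pdr3 (pdt3 (K3 u)) τ r θ =
      (3:ℝ)/2 * r ^ ((1:ℝ)/2) * Dv vT (Dv vR F) (τ,r,θ)
        + r ^ ((3:ℝ)/2) * Dv vR (Dv vT (Dv vR F)) (τ,r,θ) := hKt_r.deriv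
  have e3 : pdr3 (pdr3 (K3 u)) τ r θ =
      ((3:ℝ)/2 * ((1:ℝ)/2 * r ^ (-(1:ℝ)/2)) * Dv vR F (τ,r,θ)
          + (3:ℝ)/2 * r ^ ((1:ℝ)/2) * Dv vR (Dv vR F) (τ,r,θ))
        + ((3:ℝ)/2 * r ^ ((1:ℝ)/2) * Dv vR (Dv vR F) (τ,r,θ)
          + r ^ ((3:ℝ)/2) * Dv vR (Dv vR (Dv vR F)) (τ,r,θ)) := hKr_r.deriv
  have e4 : pdt3 (K3 u) τ r θ = r ^ ((3:ℝ)/2) * Dv vT (Dv vR F) (τ,r,θ) := hgKt τ r θ hr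
  have e5 : pdr3 (K3 u) τ r θ =
      (3:ℝ)/2 * r ^ ((1:ℝ)/2) * Dv vR F (τ,r,θ)
        + r ^ ((3:ℝ)/2) * Dv vR (Dv vR F) (τ,r,θ) := hgKr τ r θ hr
  have e6 : lap3 (K3 u) τ r θ =
      ∑ a : Fin 3, r ^ ((3:ℝ)/2) * Dv (vA a) (Dv (vA a) (Dv vR F)) (τ,r,θ) :=
    Finset.sum_congr rfl fun a _ => hgKaa a
  have e7 : Q0 u τ r θ =
      -(3 / (4 * r ^ 2)) * F (τ,r,θ) - 2 * Dv vR (Dv vT F) (τ,r,θ)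
        + Dv vR (Dv vR F) (τ,r,θ)
        + r ^ (-2:ℝ) * (∑ a : Fin 3, Dv (vA a) (Dv (vA a) F) (τ,r,θ)) := by
    simp only [Q0]
    rw [hgtr τ r θ hr, hgrr τ r θ hr, hgL τ r θ hr]
  -- symmetry of mixed partials
  have hsym1 : Dv vT (Dv vR F) (τ,r,θ) = Dv vR (Dv vT F) (τ,r,θ) := Dv_symm hFs vT vR hq
  have hsym2 : Dv vR (Dv vT (Dv vR F)) (τ,r,θ) = Dv vR (Dv vR (Dv vT F)) (τ,r,θ) :=
    Dv_congr (fun p hp => Dv_symm hFs vT vR hp) hq vR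
  have hsym3 : ∀ a : Fin 3, Dv (vA a) (Dv (vA a) (Dv vR F)) (τ,r,θ)
      = Dv vR (Dv (vA a) (Dv (vA a) F)) (τ,r,θ) := by
    intro a
    rw [Dv_congr (fun p hp => Dv_symm hFs (vA a) vR hp) hq (vA a)]
    exact Dv_symm (hGa a) (vA a) vR hq
  have hsym4 : Dv vR (fun q : E3' => ∑ a : Fin 3, Dv (vA a) (Dv (vA a) F) q) (τ,r,θ)
      = ∑ a : Fin 3, Dv vR (Dv (vA a) (Dv (vA a) F)) (τ,r,θ) := by
    show fderiv ℝ (fun q : E3' => ∑ a : Fin 3, Dv (vA a) (Dv (vA a) F) q) (τ,r,θ) vR = _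
    rw [fderiv_fun_sum (fun a _ => diffAt (hGaa a) hq)]
    simp [Dv]
  -- assemble
  show r ^ ((3:ℝ)/2) * pdr3 (Q0 u) τ r θ + 2 * r ^ ((1:ℝ)/2) * Q0 u τ r θ
      = -2 * pdr3 (pdt3 (K3 u)) τ r θ + pdr3 (pdr3 (K3 u)) τ r θ
        - r⁻¹ * pdt3 (K3 u) τ r θ - r⁻¹ * pdr3 (K3 u) τ r θ
        + r ^ (-2:ℝ) * lap3 (K3 u) τ r θ
  rw [e1, e2, e3, e4, e5, e6, e7, hsym1, hsym2, hsym4]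
  simp only [hsym3]
  rw [← Finset.mul_sum]
  -- substitute s = r^(1/2)
  have h32 : r ^ ((3:ℝ)/2) = (r ^ ((1:ℝ)/2)) ^ 3 := by
    rw [← Real.rpow_natCast (r ^ ((1:ℝ)/2)) 3, ← Real.rpow_mul hr.le]
    norm_num
  have hm12 : r ^ (-(1:ℝ)/2) = (r ^ ((1:ℝ)/2))⁻¹ := by
    rw [show -(1:ℝ)/2 = -((1:ℝ)/2) by norm_num, Real.rpow_neg hr.le]
  have hm2 : r ^ (-2:ℝ) = (r ^ 2)⁻¹ := by
    rw [show (-2:ℝ) = -(2:ℝ) by norm_num, Real.rpow_neg hr.le,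
      show (2:ℝ) = ((2:ℕ):ℝ) by norm_num, Real.rpow_natCast]
  have hm3 : r ^ (-3:ℝ) = (r ^ 3)⁻¹ := by
    rw [show (-3:ℝ) = -(3:ℝ) by norm_num, Real.rpow_neg hr.le,
      show (3:ℝ) = ((3:ℕ):ℝ) by norm_num, Real.rpow_natCast]
  rw [h32, hm12, hm2, hm3]
  set s := r ^ ((1:ℝ)/2) with hsdef
  have hs : 0 < s := Real.rpow_pos_of_pos hr _
  have hs2 : s ^ 2 = r := by
    rw [hsdef, ← Real.rpow_natCast (r ^ ((1:ℝ)/2)) 2, ← Real.rpow_mul hr.le]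
    norm_num
  rw [← hs2]
  field_simp
  ring

end
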